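/- arXiv:2104.04009 — 4 statements merged into one kernel-verified Lean document; each statement's English description precedes it below -/
import Mathlib

section
/- Lemma (representing measures, Lemma 3.2). If Π extends to a bounded operator on L¹(X,μ), then for every x ∈ X there exists Φ_x ∈ M₀ such that Φ_x(conj f) = conj(f(x)) for every f ∈ C(X,ℂ) whose L²(X,μ)-class belongs to H; equivalently, there is σ_x ∈ M₀ (viewed as a regular complex Borel measure) with ∫_X f d(conj σ_x) = f(x) for all such f. -/
open MeasureTheory
open scoped NNReal ENNReal ComplexConjugate

open Filter Topology

/-- Open neighborhoods of `x`, ordered by reverse inclusion. -/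
def Nbhd {X : Type*} [TopologicalSpace X] (x : X) : Type _ := {V : Set X // IsOpen V ∧ x ∈ V}

instance {X : Type*} [TopologicalSpace X] (x : X) : SemilatticeSup (Nbhd x) where
  le V W := W.1 ⊆ V.1
  le_refl V := subset_rfl
  le_trans a b c hab hbc := fun y hy => hab (hbc hy)
  le_antisymm a b h1 h2 := Subtype.ext (subset_antisymm h2 h1)
  sup V W := ⟨V.1 ∩ W.1, V.2.1.inter W.2.1, ⟨V.2.2, W.2.2⟩⟩
  le_sup_left V W := Set.inter_subset_left
  le_sup_right V W := Set.inter_subset_right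
  sup_le a b c hac hbc := Set.subset_inter hac hbc

instance {X : Type*} [TopologicalSpace X] (x : X) : Nonempty (Nbhd x) :=
  ⟨⟨Set.univ, isOpen_univ, trivial⟩⟩

section Jfun

variable {X : Type*} [TopologicalSpace X] [CompactSpace X]
  [MeasurableSpace X] [OpensMeasurableSpace X] (μ : Measure X)

theorem Jfun_bound (g : X → ℂ) (hg : Integrable g μ) (φ : C(X, ℂ)) :
    ‖∫ y, φ y * g y ∂μ‖ ≤ (∫ y, ‖g y‖ ∂μ) * ‖φ‖ :=
  calc ‖∫ y, φ y * g y ∂μ‖ ≤ ∫ y, ‖φ y * g y‖ ∂μ := norm_integral_le_integral_norm _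
    _ ≤ ∫ y, ‖φ‖ * ‖g y‖ ∂μ := by
        refine integral_mono ?_ (hg.norm.const_mul _) ?_
        · exact (hg.bdd_mul φ.continuous.aestronglyMeasurable
            (ae_of_all _ fun y => φ.norm_coe_le_norm y)).norm
        · intro y
          simp only [norm_mul]
          exact mul_le_mul_of_nonneg_right (φ.norm_coe_le_norm y) (norm_nonneg _)
    _ = (∫ y, ‖g y‖ ∂μ) * ‖φ‖ := by rw [integral_const_mul, mul_comm]

/-- The functional `φ ↦ ∫ φ·g dμ` on `C(X,ℂ)` attached to an integrable `g`. -/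
noncomputable def Jfun (g : X → ℂ) (hg : Integrable g μ) : WeakDual ℂ C(X, ℂ) :=
  LinearMap.mkContinuous
    { toFun := fun φ => ∫ y, φ y * g y ∂μ
      map_add' := fun φ ψ => by
        have h1 : Integrable (fun y => φ y * g y) μ :=
          hg.bdd_mul φ.continuous.aestronglyMeasurable (ae_of_all _ fun y => φ.norm_coe_le_norm y)
        have h2 : Integrable (fun y => ψ y * g y) μ :=
          hg.bdd_mul ψ.continuous.aestronglyMeasurable (ae_of_all _ fun y => ψ.norm_coe_le_norm y)
        simp only [ContinuousMap.add_apply, add_mul]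
        exact integral_add h1 h2
      map_smul' := fun c φ => by
        simp only [ContinuousMap.smul_apply, smul_eq_mul, mul_assoc, RingHom.id_apply]
        exact integral_const_mul c _ }
    (∫ y, ‖g y‖ ∂μ)
    (fun φ => by
      show ‖∫ y, φ y * g y ∂μ‖ ≤ _
      exact Jfun_bound μ g hg φ)

theorem Jfun_apply (g : X → ℂ) (hg : Integrable g μ) (φ : C(X, ℂ)) :
    Jfun μ g hg φ = ∫ y, φ y * g y ∂μ := rfl

theorem Jfun_norm_le (g : X → ℂ) (hg : Integrable g μ) :
    ‖WeakDual.toStrongDual (Jfun μ g hg)‖ ≤ ∫ y, ‖g y‖ ∂μ :=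
  ContinuousLinearMap.opNorm_le_bound _ (integral_nonneg fun y => norm_nonneg _)
    (fun φ => Jfun_bound μ g hg φ)

end Jfun

/-- Lemma 3.2 (representing measures).  If the orthogonal projection `P` onto the closed
subspace `H ⊆ L²(X,μ;ℂ)` extends to a bounded operator on `L¹(X,μ)`, then for every
`x ∈ X` there is a functional `Φₓ` in the weak-* closure `M₀` of `J(H)` such that
`Φₓ(conj f) = conj (f x)` for every continuous `f` whose `L²`-class lies in `H`
(i.e. the measure `σₓ` representing `Φₓ` satisfies `∫ f d(conj σₓ) = f x`). -/
theorem stmt_2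
    {X : Type*} [TopologicalSpace X] [CompactSpace X] [T2Space X] [ConnectedSpace X]
    [MeasurableSpace X] [BorelSpace X]
    (μ : Measure X) [IsFiniteMeasure μ] [μ.Regular] [μ.IsOpenPosMeasure]
    (H : Submodule ℂ (Lp ℂ 2 μ)) (hHclosed : IsClosed (H : Set (Lp ℂ 2 μ)))
    (P : Lp ℂ 2 μ → Lp ℂ 2 μ)
    (hPmem : ∀ f, P f ∈ H)
    (hPorth : ∀ f : Lp ℂ 2 μ, ∀ g ∈ H, (inner ℂ (f - P f) g : ℂ) = 0)
    (hbdd : ∃ C : ℝ≥0, ∀ f : Lp ℂ 2 μ,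
        eLpNorm (↑↑(P f) : X → ℂ) 1 μ ≤ (C : ℝ≥0∞) * eLpNorm (↑↑f : X → ℂ) 1 μ) :
    ∀ x : X, ∃ Φ ∈ closure {Φ : WeakDual ℂ C(X, ℂ) |
        ∃ g ∈ H, ∀ φ : C(X, ℂ), Φ φ = ∫ y, φ y * (↑↑g : X → ℂ) y ∂μ},
      ∀ f : C(X, ℂ), (ContinuousMap.toLp 2 μ ℂ f : Lp ℂ 2 μ) ∈ H →
        Φ (star f) = conj (f x) := by
  obtain ⟨C, hC⟩ := hbdd
  intro x
  classical
  let c : Nbhd x → ℂ := fun V => ((μ V.1).toReal⁻¹ : ℝ)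
  let u : Nbhd x → Lp ℂ 2 μ := fun V =>
    indicatorConstLp 2 V.2.1.measurableSet (measure_ne_top μ V.1) (c V)
  have hgInt : ∀ V : Nbhd x, Integrable (↑↑(P (u V)) : X → ℂ) μ :=
    fun V => (Lp.memLp (P (u V))).integrable one_le_two
  let G : Nbhd x → WeakDual ℂ C(X, ℂ) := fun V => Jfun μ _ (hgInt V)
  have hm0 : ∀ V : Nbhd x, μ V.1 ≠ 0 := fun V => (V.2.1.measure_pos μ ⟨x, V.2.2⟩).ne'
  have hmr : ∀ V : Nbhd x, 0 < (μ V.1).toReal :=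
    fun V => ENNReal.toReal_pos (hm0 V) (measure_ne_top μ V.1)
  -- the L¹ norm of `u V` is 1
  have huL1 : ∀ V : Nbhd x, eLpNorm (↑↑(u V) : X → ℂ) 1 μ = 1 := by
    intro V
    rw [eLpNorm_congr_ae indicatorConstLp_coeFn,
      eLpNorm_indicator_const V.2.1.measurableSet one_ne_zero ENNReal.one_ne_top]
    have h1 : ‖c V‖ₑ = ENNReal.ofReal ((μ V.1).toReal⁻¹) := by
      rw [← ofReal_norm_eq_enorm]
      simp only [c, Complex.norm_real]
      rw [Real.norm_of_nonneg (inv_nonneg.mpr (hmr V).le)]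
    rw [h1]
    simp only [ENNReal.toReal_one, one_div_one, ENNReal.rpow_one]
    nth_rewrite 2 [← ENNReal.ofReal_toReal (measure_ne_top μ V.1)]
    rw [← ENNReal.ofReal_mul (inv_nonneg.mpr (hmr V).le),
      inv_mul_cancel₀ (hmr V).ne', ENNReal.ofReal_one]
  have hgnorm : ∀ V : Nbhd x, (∫ y, ‖(↑↑(P (u V)) : X → ℂ) y‖ ∂μ) ≤ (C : ℝ) := by
    intro V
    have h2 : ENNReal.ofReal (∫ y, ‖(↑↑(P (u V)) : X → ℂ) y‖ ∂μ) ≤ (C : ℝ≥0∞) := by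
      rw [ofReal_integral_norm_eq_lintegral_enorm (hgInt V),
        ← eLpNorm_one_eq_lintegral_enorm]
      calc eLpNorm (↑↑(P (u V)) : X → ℂ) 1 μ
          ≤ (C : ℝ≥0∞) * eLpNorm (↑↑(u V) : X → ℂ) 1 μ := hC (u V)
        _ = C := by rw [huL1 V, mul_one]
    have := (ENNReal.ofReal_le_iff_le_toReal ENNReal.coe_ne_top).mp h2
    rwa [ENNReal.coe_toReal] at this
  have hGK : ∀ V : Nbhd x,
      G V ∈ WeakDual.toStrongDual ⁻¹' Metric.closedBall 0 (C : ℝ) := by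
    intro V
    simp only [Set.mem_preimage, Metric.mem_closedBall, dist_zero_right]
    exact (Jfun_norm_le μ _ (hgInt V)).trans (hgnorm V)
  have hK := WeakDual.isCompact_closedBall (𝕜 := ℂ) (E := C(X, ℂ)) 0 (C : ℝ)
  haveI : NeBot (atTop : Filter (Nbhd x)) := atTop_neBot
  have hle : Filter.map G atTop ≤ 𝓟 (WeakDual.toStrongDual ⁻¹' Metric.closedBall 0 (C : ℝ)) :=
    le_principal_iff.mpr (mem_map.mpr (Eventually.of_forall hGK))
  obtain ⟨Φ, hΦmem, hclus⟩ := hK hle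
  refine ⟨Φ, ?_, ?_⟩
  · have hS : ∀ V : Nbhd x, G V ∈ {Φ : WeakDual ℂ C(X, ℂ) |
        ∃ g ∈ H, ∀ φ : C(X, ℂ), Φ φ = ∫ y, φ y * (↑↑g : X → ℂ) y ∂μ} :=
      fun V => ⟨P (u V), hPmem (u V), fun φ => Jfun_apply μ _ (hgInt V) φ⟩
    have hle2 : Filter.map G atTop ≤ 𝓟 {Φ : WeakDual ℂ C(X, ℂ) |
        ∃ g ∈ H, ∀ φ : C(X, ℂ), Φ φ = ∫ y, φ y * (↑↑g : X → ℂ) y ∂μ} :=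
      le_principal_iff.mpr (mem_map.mpr (Eventually.of_forall hS))
    exact mem_closure_iff_clusterPt.mpr (hclus.mono hle2)
  · intro f hf
    have hfInt : Integrable (⇑f) μ :=
      f.continuous.integrable_of_hasCompactSupport (HasCompactSupport.of_compactSpace f)
    -- value of `G V` at `star f`
    have hval : ∀ V : Nbhd x,
        G V (star f) = (starRingEnd ℂ) ((c V) * ∫ y in V.1, f y ∂μ) := by
      intro V
      have e1 : G V (star f) = ∫ y, (starRingEnd ℂ) (f y) * (↑↑(P (u V)) : X → ℂ) y ∂μ := by
        show Jfun μ _ (hgInt V) (star f) = _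
        rw [Jfun_apply]
        exact integral_congr_ae (Eventually.of_forall fun y => by
          simp [ContinuousMap.star_apply])
      have e2 : (inner ℂ (ContinuousMap.toLp 2 μ ℂ f : Lp ℂ 2 μ) (P (u V)) : ℂ)
          = ∫ y, (starRingEnd ℂ) (f y) * (↑↑(P (u V)) : X → ℂ) y ∂μ := by
        rw [L2.inner_def]
        refine integral_congr_ae ?_
        filter_upwards [ContinuousMap.coeFn_toLp (p := 2) μ (𝕜 := ℂ) f] with y hy
        rw [RCLike.inner_apply', hy]
      have e3 : (inner ℂ (P (u V)) (ContinuousMap.toLp 2 μ ℂ f : Lp ℂ 2 μ) : ℂ)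
          = inner ℂ (u V) (ContinuousMap.toLp 2 μ ℂ f : Lp ℂ 2 μ) := by
        have h := hPorth (u V) _ hf
        rw [inner_sub_left, sub_eq_zero] at h
        exact h.symm
      have e4 : (inner ℂ (u V) (ContinuousMap.toLp 2 μ ℂ f : Lp ℂ 2 μ) : ℂ)
          = (c V) * ∫ y in V.1, f y ∂μ := by
        rw [L2.inner_def]
        have hae : ∀ᵐ y ∂μ, (inner ℂ ((↑↑(u V) : X → ℂ) y)
            ((↑↑(ContinuousMap.toLp 2 μ ℂ f : Lp ℂ 2 μ) : X → ℂ) y) : ℂ)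
            = V.1.indicator (fun y => (c V) * f y) y := by
          filter_upwards [indicatorConstLp_coeFn (p := 2)
            (hs := V.2.1.measurableSet) (hμs := measure_ne_top μ V.1) (c := c V),
            ContinuousMap.coeFn_toLp (p := 2) μ (𝕜 := ℂ) f] with y h1 h2
          rw [RCLike.inner_apply', h1, h2]
          by_cases hy : y ∈ V.1
          · simp [Set.indicator_of_mem hy, c, Complex.conj_ofReal]
          · simp [Set.indicator_of_notMem hy]
        rw [integral_congr_ae hae, integral_indicator V.2.1.measurableSet,
          integral_const_mul]
      calc G V (star f) = inner ℂ (ContinuousMap.toLp 2 μ ℂ f : Lp ℂ 2 μ) (P (u V)) := by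
            rw [e1, ← e2]
        _ = (starRingEnd ℂ) (inner ℂ (P (u V)) (ContinuousMap.toLp 2 μ ℂ f : Lp ℂ 2 μ)) :=
            (inner_conj_symm _ _).symm
        _ = _ := by rw [e3, e4]
    -- convergence of averages
    have havg : Tendsto (fun V : Nbhd x => (c V) * ∫ y in V.1, f y ∂μ) atTop (𝓝 (f x)) := by
      rw [Metric.tendsto_atTop]
      intro ε hε
      have hcont : ∀ᶠ y in 𝓝 x, dist (f y) (f x) < ε / 2 :=
        f.continuous.continuousAt (Metric.ball_mem_nhds _ (half_pos hε))
      obtain ⟨t, htall, htopen, hxt⟩ := eventually_nhds_iff.mp hcont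
      refine ⟨⟨t, htopen, hxt⟩, fun V hV => ?_⟩
      have hsub : V.1 ⊆ t := hV
      have hμV : μ V.1 < ∞ := measure_lt_top μ _
      have hδ : ∀ y ∈ V.1, ‖f y - f x‖ ≤ ε / 2 := fun y hy => by
        rw [← dist_eq_norm]; exact (htall y (hsub hy)).le
      have hIf : IntegrableOn (⇑f) V.1 μ := hfInt.integrableOn
      have hIc : IntegrableOn (fun _ : X => f x) V.1 μ :=
        (integrableOn_const_iff (C := f x)).mpr (Or.inr hμV)
      have key : (c V) * ∫ y in V.1, f y ∂μ - f x
          = (c V) * ∫ y in V.1, (f y - f x) ∂μ := by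
        rw [integral_sub hIf hIc, setIntegral_const, mul_sub]
        congr 1
        rw [Complex.real_smul, ← mul_assoc, ← Complex.ofReal_mul, measureReal_def,
          inv_mul_cancel₀ (hmr V).ne', Complex.ofReal_one, one_mul]
      rw [dist_eq_norm, key, norm_mul]
      have hnormc : ‖c V‖ = ((μ V.1).toReal)⁻¹ := by
        simp only [c, Complex.norm_real]
        exact abs_of_nonneg (inv_nonneg.mpr (hmr V).le)
      have hbound : ‖∫ y in V.1, (f y - f x) ∂μ‖ ≤ (ε / 2) * (μ V.1).toReal :=
        norm_setIntegral_le_of_norm_le_const hμV hδ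
      calc ‖c V‖ * ‖∫ y in V.1, (f y - f x) ∂μ‖
          ≤ ((μ V.1).toReal)⁻¹ * ((ε / 2) * (μ V.1).toReal) := by
            rw [hnormc]
            exact mul_le_mul_of_nonneg_left hbound (inv_nonneg.mpr (hmr V).le)
        _ = ε / 2 := by rw [mul_comm (ε / 2), ← mul_assoc, inv_mul_cancel₀ (hmr V).ne', one_mul]
        _ < ε := half_lt_self hε
    have htends : Tendsto (fun V : Nbhd x => G V (star f)) atTop
        (𝓝 ((starRingEnd ℂ) (f x))) := by
      have h := (Complex.continuous_conj.tendsto (f x)).comp havg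
      refine Tendsto.congr (fun V => ?_) h
      exact (hval V).symm
    have hev : Continuous (fun Ψ : WeakDual ℂ C(X, ℂ) => Ψ (star f)) :=
      WeakDual.eval_continuous _
    have hmapeq : Filter.map (fun Ψ : WeakDual ℂ C(X, ℂ) => Ψ (star f)) (Filter.map G atTop)
        = Filter.map (fun V : Nbhd x => G V (star f)) atTop := Filter.map_map
    have hclus2 : ClusterPt (Φ (star f))
        (Filter.map (fun V : Nbhd x => G V (star f)) atTop) :=
      hclus.map hev.continuousAt (le_of_eq hmapeq)
    exact eq_of_nhds_neBot (hclus2.mono htends)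
end

section
/- Proposition (Proposition 3.6, first part). Let K ⊆ ℂ be compact and connected. Then Re(K) = Re(b_out K) and Im(K) = Im(b_out K), where b_out K is the outer boundary of K. -/
open Bornology

/-- The outer boundary of a compact set `K ⊆ ℂ`: the topological frontier of
`K₁ := ℂ \ U_K`, where `U_K` is the (unique, for `K` compact) unbounded connected
component of `ℂ \ K`, here encoded as the set of points of `Kᶜ` whose connected
component in `Kᶜ` is unbounded. -/
def outerBoundary (K : Set ℂ) : Set ℂ :=
  frontier {z : ℂ | z ∉ K ∧ ¬ IsBounded (connectedComponentIn Kᶜ z)}ᶜ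

lemma aux_image_eq (K : Set ℂ) (hK : IsCompact K) (f g : ℂ → ℝ) (hf : Continuous f)
    (hg : Continuous g) (v : ℂ) (hv : v ≠ 0)
    (hfv : ∀ (z : ℂ) (t : ℝ), f (z + t • v) = f z)
    (hgv : ∀ (z : ℂ) (t : ℝ), g (z + t • v) = g z + t) :
    f '' K = f '' outerBoundary K := by
  set U : Set ℂ := {z : ℂ | z ∉ K ∧ ¬ IsBounded (connectedComponentIn Kᶜ z)} with hU
  set K₁ : Set ℂ := Uᶜ with hK₁
  have hKc : IsOpen Kᶜ := hK.isClosed.isOpen_compl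
  -- U is open
  have hUopen : IsOpen U := by
    rw [isOpen_iff_forall_mem_open]
    intro z hz
    refine ⟨connectedComponentIn Kᶜ z, ?_, hKc.connectedComponentIn, mem_connectedComponentIn hz.1⟩
    intro w hw
    have hwK : w ∈ Kᶜ := connectedComponentIn_subset _ _ hw
    have heq := connectedComponentIn_eq hw
    exact ⟨hwK, by rw [← heq]; exact hz.2⟩
  have hK₁closed : IsClosed K₁ := hUopen.isClosed_compl
  -- K₁ is bounded
  obtain ⟨r0, hr0⟩ := (Metric.isBounded_iff_subset_closedBall (0 : ℂ)).1 hK.isBounded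
  set r : ℝ := max r0 0 with hr
  have hKr : K ⊆ Metric.closedBall 0 r :=
    hr0.trans (Metric.closedBall_subset_closedBall (le_max_left _ _))
  have hK₁sub : K₁ ⊆ Metric.closedBall 0 r := by
    intro z hz
    by_contra hzb
    have hznorm : r < ‖z‖ := by
      simpa [Metric.mem_closedBall, dist_zero_right] using hzb
    have hzpos : 0 < ‖z‖ := lt_of_le_of_lt (le_max_right _ _) hznorm
    have hzK : z ∉ K := fun h => hzb (hKr h)
    -- the ray {t • z : t ≥ 1} is an unbounded connected subset of Kᶜ containing z
    set ray : Set ℂ := (fun t : ℝ => t • z) '' Set.Ici 1 with hray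
    have hrayKc : ray ⊆ Kᶜ := by
      rintro - ⟨t, ht, rfl⟩
      intro hmem
      have : ‖t • z‖ ≤ r := by
        simpa [dist_zero_right] using hKr hmem
      rw [norm_smul, Real.norm_eq_abs, abs_of_nonneg (le_trans zero_le_one ht)] at this
      have h1 : (1:ℝ) ≤ t := ht
      have h2 : ‖z‖ ≤ t * ‖z‖ := le_mul_of_one_le_left hzpos.le h1
      linarith
    have hrayconn : IsPreconnected ray :=
      isPreconnected_Ici.image _ (continuous_id.smul continuous_const).continuousOn
    have hzray : z ∈ ray := ⟨1, Set.mem_Ici.2 le_rfl, one_smul _ _⟩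
    have hsub : ray ⊆ connectedComponentIn Kᶜ z :=
      hrayconn.subset_connectedComponentIn hzray hrayKc
    have hunb : ¬ IsBounded (connectedComponentIn Kᶜ z) := by
      intro hb
      obtain ⟨C, hC⟩ := (isBounded_iff_forall_norm_le).1 (hb.subset hsub)
      set t : ℝ := max 1 ((C + 1) / ‖z‖) with ht
      have h1 : (1 : ℝ) ≤ t := le_max_left _ _
      have h2 : (C + 1) / ‖z‖ ≤ t := le_max_right _ _
      have := hC (t • z) ⟨t, h1, rfl⟩
      rw [norm_smul, Real.norm_eq_abs, abs_of_nonneg (le_trans zero_le_one h1)] at this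
      have : C + 1 ≤ t * ‖z‖ := by
        rw [div_le_iff₀ hzpos] at h2; linarith
      linarith [hC (t • z) ⟨t, h1, rfl⟩,
        (by rw [norm_smul, Real.norm_eq_abs, abs_of_nonneg (le_trans zero_le_one h1)] :
          ‖t • z‖ = t * ‖z‖)]
    exact hz ⟨hzK, hunb⟩
  have hK₁cpt : IsCompact K₁ :=
    Metric.isCompact_of_isClosed_isBounded hK₁closed
      ((Metric.isBounded_closedBall).subset hK₁sub)
  have hKsubK₁ : K ⊆ K₁ := by
    intro z hz h
    exact h.1 hz
  -- frontier K₁ ⊆ K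
  have hfrK : frontier K₁ ⊆ K := by
    intro z hz
    by_contra hzK
    have hzK₁ : z ∈ K₁ := by
      rw [← hK₁closed.closure_eq]; exact hz.1
    have hbdd : IsBounded (connectedComponentIn Kᶜ z) := by
      by_contra hb
      exact hzK₁ ⟨hzK, hb⟩
    have hcompsub : connectedComponentIn Kᶜ z ⊆ K₁ := by
      intro w hw
      intro hwU
      have heq := connectedComponentIn_eq hw
      exact hwU.2 (heq ▸ hbdd)
    have : z ∈ interior K₁ :=
      mem_interior.2 ⟨connectedComponentIn Kᶜ z, hcompsub, hKc.connectedComponentIn,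
        mem_connectedComponentIn hzK⟩
    exact hz.2 this
  -- now the image equality
  have hob : outerBoundary K = frontier K₁ := rfl
  rw [hob]
  apply Set.Subset.antisymm
  · rintro - ⟨z0, hz0, rfl⟩
    set x : ℝ := f z0 with hx
    set S : Set ℂ := K₁ ∩ f ⁻¹' {x} with hS
    have hScpt : IsCompact S := hK₁cpt.inter_right (isClosed_singleton.preimage hf)
    have hSne : S.Nonempty := ⟨z0, hKsubK₁ hz0, rfl⟩
    obtain ⟨z, hzS, hmax⟩ := hScpt.exists_isMaxOn hSne hg.continuousOn
    have hzfr : z ∈ frontier K₁ := by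
      rw [frontier_eq_closure_inter_closure]
      refine ⟨subset_closure hzS.1, ?_⟩
      rw [Metric.mem_closure_iff]
      intro ε hε
      have hvnorm : 0 < ‖v‖ := norm_pos_iff.2 hv
      set t : ℝ := ε / (2 * ‖v‖) with ht
      have htpos : 0 < t := div_pos hε (by positivity)
      refine ⟨z + t • v, ?_, ?_⟩
      · intro hb
        have hfb : f (z + t • v) = x := by rw [hfv]; exact hzS.2
        have hbS : z + t • v ∈ S := ⟨hb, hfb⟩
        have := hmax hbS
        simp only [Set.mem_setOf_eq] at this
        rw [hgv] at this
        linarith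
      · have hdiff : z - (z + t • v) = -(t • v) := by ring
        have hdist : dist z (z + t • v) = t * ‖v‖ := by
          rw [dist_eq_norm, hdiff, norm_neg, norm_smul, Real.norm_eq_abs, abs_of_pos htpos]
        have h2 : t * ‖v‖ = ε / 2 := by
          rw [ht, div_mul_eq_mul_div, mul_comm 2 ‖v‖, ← div_div, mul_div_assoc,
            div_self hvnorm.ne', mul_one]
        rw [hdist, h2]
        linarith
    exact ⟨z, hzfr, hzS.2⟩
  · rintro - ⟨z, hz, rfl⟩
    exact ⟨z, hfrK hz, rfl⟩

/-- Proposition 3.6, first part: for a compact connected `K ⊆ ℂ`, the sets of real parts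
(resp. imaginary parts) of `K` and of its outer boundary coincide. -/
theorem stmt_5 (K : Set ℂ) (hK : IsCompact K) (hc : IsConnected K) :
    Complex.re '' K = Complex.re '' outerBoundary K ∧
      Complex.im '' K = Complex.im '' outerBoundary K := by
  constructor
  · exact aux_image_eq K hK Complex.re Complex.im Complex.continuous_re Complex.continuous_im
      Complex.I Complex.I_ne_zero
      (by intro z t; simp [Complex.add_re, Complex.smul_re])
      (by intro z t; simp [Complex.add_im, Complex.smul_im])
  · exact aux_image_eq K hK Complex.im Complex.re Complex.continuous_im Complex.continuous_re
      1 one_ne_zero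
      (by intro z t; simp [Complex.add_im, Complex.smul_im])
      (by intro z t; simp [Complex.add_re, Complex.smul_re])
end

section
/- Proposition (Proposition 3.6, second part). Let K ⊆ ℂ be compact and connected, and assume K is not a singleton (K contains at least two points). Then the outer boundary b_out K is an uncountable set. -/
open Bornology

/-- A preconnected set meeting both a set and its complement meets the frontier. -/
lemma frontier_meets {L S : Set ℂ} (hL : IsPreconnected L) (h1 : (L ∩ S).Nonempty)
    (h2 : (L \ S).Nonempty) : (L ∩ frontier S).Nonempty := by
  by_contra h
  rw [Set.not_nonempty_iff_eq_empty] at h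
  have hdisj : ∀ x ∈ L, x ∉ frontier S := by
    intro x hx hfx
    exact Set.eq_empty_iff_forall_notMem.mp h x ⟨hx, hfx⟩
  have hsub : L ⊆ interior S ∪ interior Sᶜ := by
    intro x hx
    have hfx := hdisj x hx
    rw [frontier_eq_closure_inter_closure] at hfx
    rcases not_and_or.mp hfx with hcs | hcsc
    · right; rwa [interior_compl, Set.mem_compl_iff]
    · left
      have : x ∈ closure Sᶜ → False := hcsc
      rw [closure_compl] at hcsc
      simpa using hcsc
  obtain ⟨x, hxL, hxS⟩ := h1
  obtain ⟨y, hyL, hyS⟩ := h2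
  have hxint : x ∈ interior S := by
    rcases hsub hxL with hs | hs
    · exact hs
    · exact absurd (interior_subset hs) (by simpa using hxS)
  have hyint : y ∈ interior Sᶜ := by
    rcases hsub hyL with hs | hs
    · exact absurd (interior_subset hs) hyS
    · exact hs
  obtain ⟨z, hzL, hz1, hz2⟩ := hL (interior S) (interior Sᶜ) isOpen_interior isOpen_interior
    hsub ⟨x, hxL, hxint⟩ ⟨y, hyL, hyint⟩
  exact (interior_subset hz2) (interior_subset hz1)

/-- Key lemma: any "vertical line" (in coordinates given by a norm-preserving
homeomorphism `f` with inverse `g`) that meets `K` also meets the outer boundary. -/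
lemma line_meets_outerBoundary (K : Set ℂ) (hK : IsCompact K) (f g : ℂ → ℂ)
    (hg : Continuous g) (hfg : ∀ z, f (g z) = z) (hgf : ∀ z, g (f z) = z)
    (hng : ∀ z, ‖g z‖ = ‖z‖) (t : ℝ) (hz : ∃ z ∈ K, (f z).re = t) :
    ∃ w ∈ outerBoundary K, (f w).re = t := by
  obtain ⟨R, hR⟩ := isBounded_iff_forall_norm_le.mp hK.isBounded
  set M : ℝ := max R 0 + 1 with hM
  have hM0 : (0:ℝ) ≤ M := by positivity
  have hMR : R < M := lt_of_le_of_lt (le_max_left R 0) (by linarith)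
  -- the line in original coordinates
  set L : Set ℂ := {z : ℂ | (f z).re = t} with hLdef
  set S : Set ℂ := {z : ℂ | z ∉ K ∧ ¬ IsBounded (connectedComponentIn Kᶜ z)} with hSdef
  -- norm lower bound for points on the vertical ray
  have hnorm : ∀ y : ℝ, y ≤ ‖g (t + y * Complex.I)‖ := by
    intro y
    rw [hng]
    calc y ≤ |(t + y * Complex.I).im| := by
            simp [Complex.add_im, Complex.mul_im]
            exact le_abs_self y
      _ ≤ ‖(t + y * Complex.I : ℂ)‖ := Complex.abs_im_le_norm _
  -- the ray
  set ray : Set ℂ := g '' ((fun y : ℝ => (t : ℂ) + y * Complex.I) '' Set.Ici M) with hray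
  have hrayL : ray ⊆ L := by
    rintro _ ⟨_, ⟨y, _, rfl⟩, rfl⟩
    simp only [hLdef, Set.mem_setOf_eq, hfg]
    simp
  have hrayKc : ray ⊆ Kᶜ := by
    rintro _ ⟨_, ⟨y, hy, rfl⟩, rfl⟩
    intro hmem
    have := hR _ hmem
    have h2 := hnorm y
    have : y ≤ R := le_trans h2 this
    have : M ≤ R := le_trans hy this
    linarith
  have hrayconn : IsPreconnected ray := by
    apply IsPreconnected.image _ g (hg.continuousOn)
    apply IsPreconnected.image _ _ (by fun_prop)
    exact isPreconnected_Ici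
  have hrayunb : ¬ IsBounded ray := by
    intro hb
    obtain ⟨r, hr⟩ := isBounded_iff_forall_norm_le.mp hb
    set y : ℝ := max M (r + 1) with hy
    have hmem : g ((t : ℂ) + y * Complex.I) ∈ ray := ⟨_, ⟨y, Set.mem_Ici.mpr (le_max_left _ _), rfl⟩, rfl⟩
    have h1 := hr _ hmem
    have h2 := hnorm y
    have : r + 1 ≤ y := le_max_right _ _
    linarith
  -- the far point
  set p : ℂ := g ((t : ℂ) + M * Complex.I) with hp
  have hpray : p ∈ ray := ⟨_, ⟨M, le_refl M, rfl⟩, rfl⟩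
  have hpS : p ∈ S := by
    constructor
    · exact fun h => hrayKc hpray h
    · intro hb
      exact hrayunb (hb.subset (hrayconn.subset_connectedComponentIn hpray hrayKc))
  -- a point of K on the line is not in S
  obtain ⟨z, hzK, hzt⟩ := hz
  have hzS : z ∉ S := fun h => h.1 hzK
  -- the line is preconnected
  have hLconn : IsPreconnected L := by
    have : L = g '' {w : ℂ | w.re = t} := by
      ext x
      constructor
      · intro hx
        exact ⟨f x, hx, hgf x⟩
      · rintro ⟨w, hw, rfl⟩
        simpa [hLdef, hfg] using hw
    rw [this]
    apply IsPreconnected.image _ g (hg.continuousOn)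
    have : {w : ℂ | w.re = t} = Set.range (fun y : ℝ => (t : ℂ) + y * Complex.I) := by
      ext w
      simp only [Set.mem_setOf_eq, Set.mem_range]
      constructor
      · intro hw
        exact ⟨w.im, by apply Complex.ext <;> simp [hw]⟩
      · rintro ⟨y, rfl⟩; simp
    rw [this]
    rw [← Set.image_univ]
    exact isPreconnected_univ.image _ (by fun_prop)
  -- conclude
  have h1 : (L ∩ S).Nonempty := ⟨p, hrayL hpray, hpS⟩
  have h2 : (L \ S).Nonempty := ⟨z, hzt, hzS⟩
  obtain ⟨w, hwL, hwF⟩ := frontier_meets hLconn h1 h2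
  refine ⟨w, ?_, hwL⟩
  rw [outerBoundary, frontier_compl]
  exact hwF

lemma aux_uncountable (K : Set ℂ) (hK : IsCompact K) (hc : IsConnected K)
    (f g : ℂ → ℂ) (hf : Continuous f) (hg : Continuous g) (hfg : ∀ z, f (g z) = z)
    (hgf : ∀ z, g (f z) = z) (hng : ∀ z, ‖g z‖ = ‖z‖)
    (a b : ℂ) (ha : a ∈ K) (hb : b ∈ K) (hlt : (f a).re < (f b).re) :
    ¬ (outerBoundary K).Countable := by
  intro hcnt
  have hIVT : Set.Icc (f a).re (f b).re ⊆ (fun z => (f z).re) '' K :=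
    hc.isPreconnected.intermediate_value ha hb ((Complex.continuous_re.comp hf).continuousOn)
  have hsub : Set.Icc (f a).re (f b).re ⊆ (fun w => (f w).re) '' outerBoundary K := by
    intro t ht
    obtain ⟨z, hzK, hzt⟩ := hIVT ht
    obtain ⟨w, hw, hwt⟩ := line_meets_outerBoundary K hK f g hg hfg hgf hng t ⟨z, hzK, hzt⟩
    exact ⟨w, hw, hwt⟩
  have hcnt2 : (Set.Icc (f a).re (f b).re).Countable := (hcnt.image _).mono hsub
  rw [← Cardinal.le_aleph0_iff_set_countable, Cardinal.mk_Icc_real hlt] at hcnt2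
  exact (Cardinal.aleph0_lt_continuum).not_ge hcnt2

/-- Proposition 3.6, second part: the outer boundary of a compact connected subset of `ℂ`
which is not a singleton is uncountable. -/
theorem stmt_6 (K : Set ℂ) (hK : IsCompact K) (hc : IsConnected K)
    (h2 : ∃ a ∈ K, ∃ b ∈ K, a ≠ b) :
    ¬ (outerBoundary K).Countable := by
  obtain ⟨a, ha, b, hb, hab⟩ := h2
  have hcases : a.re ≠ b.re ∨ a.im ≠ b.im := by
    by_contra h
    push_neg at h
    exact hab (Complex.ext h.1 h.2)
  have hfg1 : ∀ z : ℂ, id (id z) = z := fun z => rfl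
  have hng1 : ∀ z : ℂ, ‖(id z : ℂ)‖ = ‖z‖ := fun z => rfl
  have hfg2 : ∀ z : ℂ, (-Complex.I) * (Complex.I * z) = z := by
    intro z; rw [← mul_assoc]; simp
  have hgf2 : ∀ z : ℂ, Complex.I * ((-Complex.I) * z) = z := by
    intro z; rw [← mul_assoc]; simp
  have hng2 : ∀ z : ℂ, ‖Complex.I * z‖ = ‖z‖ := by
    intro z; simp
  have hre2 : ∀ z : ℂ, ((-Complex.I) * z).re = z.im := by
    intro z; simp
  rcases hcases with h | h
  · rcases h.lt_or_gt with hlt | hlt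
    · exact aux_uncountable K hK hc id id continuous_id continuous_id hfg1 hfg1 hng1
        a b ha hb hlt
    · exact aux_uncountable K hK hc id id continuous_id continuous_id hfg1 hfg1 hng1
        b a hb ha hlt
  · rcases h.lt_or_gt with hlt | hlt
    · exact aux_uncountable K hK hc (fun z => -Complex.I * z) (fun z => Complex.I * z)
        (by fun_prop) (by fun_prop) hfg2 hgf2 hng2 a b ha hb (by simpa [hre2] using hlt)
    · exact aux_uncountable K hK hc (fun z => -Complex.I * z) (fun z => Complex.I * z)
        (by fun_prop) (by fun_prop) hfg2 hgf2 hng2 b a hb ha (by simpa [hre2] using hlt)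
end

section
/- Claim (no atoms for measure solutions of a nondegenerate first-order equation, used in the proofs of Theorem 4.1 and Lemma 4.4). Let U ⊆ ℝ^d be open, x₀ ∈ U, let a₁, …, a_d : U → ℂ and c : U → ℂ be C^∞ functions with (a₁(x₀), …, a_d(x₀)) ≠ 0, and let σ be a regular complex Borel measure on U with finite total variation (encoded as σ = (μ₁ − μ₂) + i(μ₃ − μ₄) for finite regular Borel measures μ₁, μ₂, μ₃, μ₄ on U, with ∫ φ dσ := ∫ φ dμ₁ − ∫ φ dμ₂ + i(∫ φ dμ₃ − ∫ φ dμ₄)). If ∫_U ( Σ_{k=1}^d a_k(x) ∂φ/∂x_k (x) + c(x) φ(x) ) dσ(x) = 0 for every C^∞ compactly supported function φ : U → ℂ, then σ({x₀}) = 0, i.e. μ₁({x₀}) − μ₂({x₀}) + i(μ₃({x₀}) − μ₄({x₀})) = 0 and moreover the total variation of σ assigns zero mass to {x₀}. -/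
open MeasureTheory

open Metric Filter Topology in
/-- No atoms for complex measure solutions of a nondegenerate first-order equation:
if a regular complex Borel measure `σ = (μ₁ - μ₂) + i(μ₃ - μ₄)` on an open set
`U ⊆ ℝ^d` satisfies `∫ (Σₖ aₖ ∂ₖφ + cφ) dσ = 0` for all test functions `φ`, where the
smooth coefficients of the principal part satisfy `(a₁(x₀), …, a_d(x₀)) ≠ 0` at a point
`x₀ ∈ U`, then `σ({x₀}) = 0`. -/
theorem stmt_12 {d : ℕ} (U : Set (EuclideanSpace ℝ (Fin d))) (hU : IsOpen U)
    (x₀ : EuclideanSpace ℝ (Fin d)) (hx₀ : x₀ ∈ U)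
    (a : Fin d → EuclideanSpace ℝ (Fin d) → ℂ) (c : EuclideanSpace ℝ (Fin d) → ℂ)
    (ha : ∀ k, ContDiffOn ℝ (⊤ : ℕ∞) (a k) U) (hc : ContDiffOn ℝ (⊤ : ℕ∞) c U)
    (hnz : ∃ k, a k x₀ ≠ 0)
    (μ₁ μ₂ μ₃ μ₄ : Measure (EuclideanSpace ℝ (Fin d)))
    [IsFiniteMeasure μ₁] [IsFiniteMeasure μ₂] [IsFiniteMeasure μ₃] [IsFiniteMeasure μ₄]
    [μ₁.Regular] [μ₂.Regular] [μ₃.Regular] [μ₄.Regular]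
    (hsupp₁ : μ₁ Uᶜ = 0) (hsupp₂ : μ₂ Uᶜ = 0) (hsupp₃ : μ₃ Uᶜ = 0) (hsupp₄ : μ₄ Uᶜ = 0)
    (heq : ∀ φ : EuclideanSpace ℝ (Fin d) → ℂ, ContDiff ℝ (⊤ : ℕ∞) φ →
      HasCompactSupport φ → tsupport φ ⊆ U →
      ∀ g : EuclideanSpace ℝ (Fin d) → ℂ,
        (g = fun x => (∑ k, a k x * fderiv ℝ φ x (EuclideanSpace.single k 1)) + c x * φ x) →
        (∫ x, g x ∂μ₁) - (∫ x, g x ∂μ₂)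
          + Complex.I * ((∫ x, g x ∂μ₃) - (∫ x, g x ∂μ₄)) = 0) :
    ((μ₁ {x₀}).toReal : ℂ) - ((μ₂ {x₀}).toReal : ℂ)
      + Complex.I * (((μ₃ {x₀}).toReal : ℂ) - ((μ₄ {x₀}).toReal : ℂ)) = 0 := by
  classical
  obtain ⟨k, hk⟩ := hnz
  -- a small closed ball around x₀ inside U
  obtain ⟨r₀, hr₀pos, hr₀⟩ : ∃ r > 0, closedBall x₀ r ⊆ U := by
    obtain ⟨ε, hε, hb⟩ := Metric.isOpen_iff.1 hU x₀ hx₀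
    exact ⟨ε/2, by positivity, (closedBall_subset_ball (by linarith)).trans hb⟩
  -- the model test function h(y) = ψ(y) • y_k
  let ψ : ContDiffBump (0 : EuclideanSpace ℝ (Fin d)) := ⟨1/2, 1, by norm_num, by norm_num⟩
  let L : EuclideanSpace ℝ (Fin d) →L[ℝ] ℂ := Complex.ofRealCLM.comp (EuclideanSpace.proj k)
  set h : EuclideanSpace ℝ (Fin d) → ℂ := fun y => ψ y • L y with hh_def
  have hcd : ContDiff ℝ (⊤:ℕ∞) h := ψ.contDiff.smul L.contDiff
  have hts_h : tsupport h ⊆ closedBall 0 1 := by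
    apply closure_minimal _ Metric.isClosed_closedBall
    intro y hy
    have hψ : ψ y ≠ 0 := by
      intro h0
      apply hy
      show ψ y • L y = 0
      rw [h0, zero_smul]
    have : y ∈ ball (0 : EuclideanSpace ℝ (Fin d)) ψ.rOut := ψ.support_eq ▸ Function.mem_support.2 hψ
    exact ball_subset_closedBall this
  have hK : HasCompactSupport h := HasCompactSupport.intro (isCompact_closedBall 0 1)
    (fun x hx => by
      by_contra h0
      exact hx (hts_h (subset_tsupport h (Function.mem_support.2 h0))))
  have hfd0 : fderiv ℝ h 0 = L := by
    have hev : h =ᶠ[nhds (0 : EuclideanSpace ℝ (Fin d))] L := by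
      filter_upwards [closedBall_mem_nhds (0 : EuclideanSpace ℝ (Fin d))
        (by norm_num : (0:ℝ) < 1/2)] with y hy
      show ψ y • L y = L y
      rw [ψ.one_of_mem_closedBall hy, one_smul]
    rw [hev.fderiv_eq, L.fderiv]
  have hLj : ∀ j : Fin d, L (EuclideanSpace.single j 1) = if k = j then 1 else 0 := by
    intro j
    show (((EuclideanSpace.single j (1:ℝ)) k : ℝ) : ℂ) = _
    rw [EuclideanSpace.single_apply]
    split <;> simp
  have h0 : h 0 = 0 := by
    show ψ 0 • L 0 = 0
    rw [map_zero, smul_zero]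
  -- the rescaled test functions
  set φ : ℕ → EuclideanSpace ℝ (Fin d) → ℂ :=
    fun n x => ((n:ℝ))⁻¹ • h ((n:ℝ) • (x - x₀)) with hφ_def
  have hφcd : ∀ n, ContDiff ℝ (⊤:ℕ∞) (φ n) := fun n =>
    (hcd.comp ((contDiff_id.sub contDiff_const).const_smul (n:ℝ))).const_smul _
  have hφsupp : ∀ n, 1 ≤ n → tsupport (φ n) ⊆ closedBall x₀ ((n:ℝ)⁻¹) := by
    intro n hn
    apply closure_minimal _ Metric.isClosed_closedBall
    intro x hx
    have hne : h ((n:ℝ) • (x - x₀)) ≠ 0 := by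
      intro he
      apply hx
      show ((n:ℝ))⁻¹ • h ((n:ℝ) • (x - x₀)) = 0
      rw [he, smul_zero]
    have hmem : (n:ℝ) • (x - x₀) ∈ closedBall (0 : EuclideanSpace ℝ (Fin d)) 1 :=
      hts_h (subset_tsupport h (Function.mem_support.2 hne))
    have hnpos : (0:ℝ) < n := by exact_mod_cast hn
    rw [mem_closedBall_iff_norm, sub_zero, norm_smul, Real.norm_natCast] at hmem
    rw [mem_closedBall_iff_norm]
    rw [← le_div_iff₀' hnpos] at hmem
    simpa [one_div] using hmem
  have hfdφ : ∀ n, 1 ≤ n → ∀ x v,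
      fderiv ℝ (φ n) x v = fderiv ℝ h ((n:ℝ) • (x - x₀)) v := by
    intro n hn x v
    have hnR : (n:ℝ) ≠ 0 := by positivity
    have hA : HasFDerivAt (fun x : EuclideanSpace ℝ (Fin d) => (n:ℝ) • (x - x₀))
        ((n:ℝ) • ContinuousLinearMap.id ℝ (EuclideanSpace ℝ (Fin d))) x :=
      ((hasFDerivAt_id x).sub_const x₀).const_smul (n:ℝ)
    have hhd : HasFDerivAt h (fderiv ℝ h ((n:ℝ) • (x - x₀))) ((n:ℝ) • (x - x₀)) :=
      (hcd.differentiable (by simp) ((n:ℝ) • (x - x₀))).hasFDerivAt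
    have hφ' : HasFDerivAt (φ n)
        (((n:ℝ))⁻¹ • ((fderiv ℝ h ((n:ℝ) • (x - x₀))).comp
          ((n:ℝ) • ContinuousLinearMap.id ℝ (EuclideanSpace ℝ (Fin d))))) x :=
      (hhd.comp x hA).const_smul ((n:ℝ)⁻¹)
    rw [hφ'.fderiv]
    simp [_root_.map_smul, smul_smul, inv_mul_cancel₀ hnR]
  -- the integrands
  set g : ℕ → EuclideanSpace ℝ (Fin d) → ℂ := fun n x =>
    (∑ j, a j x * fderiv ℝ (φ n) x (EuclideanSpace.single j 1)) + c x * φ n x with hg_def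
  -- g vanishes off the support of φ n
  have hg0 : ∀ n, ∀ x, x ∉ tsupport (φ n) → g n x = 0 := by
    intro n x hx
    have h1 : φ n x = 0 := image_eq_zero_of_notMem_tsupport hx
    have h2 : fderiv ℝ (φ n) x = 0 :=
      Function.notMem_support.mp (fun hs => hx (support_fderiv_subset ℝ hs))
    simp [hg_def, h1, h2]
  -- threshold
  set N : ℕ := max 1 ⌈r₀⁻¹⌉₊ with hN_def
  have hN1 : ∀ n, N ≤ n → 1 ≤ n := fun n hn => le_trans (le_max_left _ _) hn
  have hNinv : ∀ n, N ≤ n → (n:ℝ)⁻¹ ≤ r₀ := by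
    intro n hn
    have h1 : r₀⁻¹ ≤ (n:ℝ) := by
      refine le_trans (Nat.le_ceil _) ?_
      exact_mod_cast le_trans (le_max_right 1 _) hn
    exact inv_le_of_inv_le₀ hr₀pos h1
  have hφU : ∀ n, N ≤ n → tsupport (φ n) ⊆ U := fun n hn =>
    (hφsupp n (hN1 n hn)).trans ((closedBall_subset_closedBall (hNinv n hn)).trans hr₀)
  have hφcs : ∀ n, 1 ≤ n → HasCompactSupport (φ n) := fun n hn =>
    IsCompact.of_isClosed_subset (isCompact_closedBall _ _) (isClosed_tsupport _) (hφsupp n hn)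
  -- value of g at x₀
  have hgx₀ : ∀ n, 1 ≤ n → g n x₀ = a k x₀ := by
    intro n hn
    have hd : ∀ j : Fin d, fderiv ℝ (φ n) x₀ (EuclideanSpace.single j 1)
        = if k = j then 1 else 0 := by
      intro j
      rw [hfdφ n hn]
      simp only [sub_self, smul_zero, hfd0]
      exact hLj j
    have hv : φ n x₀ = 0 := by
      show ((n:ℝ))⁻¹ • h ((n:ℝ) • (x₀ - x₀)) = 0
      rw [sub_self, smul_zero, h0, smul_zero]
    simp [hg_def, hd, hv, mul_ite, Finset.sum_ite_eq]
  -- uniform bounds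
  obtain ⟨Ca, hCa⟩ := (isCompact_closedBall x₀ r₀).exists_bound_of_continuousOn
    (continuousOn_finset_sum Finset.univ
      (fun j _ => (((ha j).continuousOn).mono hr₀).norm) :
      ContinuousOn (fun x => ∑ j, ‖a j x‖) (closedBall x₀ r₀))
  obtain ⟨Cc, hCc⟩ := (isCompact_closedBall x₀ r₀).exists_bound_of_continuousOn
    ((hc.continuousOn).mono hr₀)
  obtain ⟨Ch, hCh⟩ := (hcd.continuous_fderiv (by simp)
    ).bounded_above_of_compact_support (hK.fderiv ℝ)
  obtain ⟨Ch', hCh'⟩ := hcd.continuous.bounded_above_of_compact_support hK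
  have hCa0 : 0 ≤ Ca := le_trans (norm_nonneg _) (hCa x₀ (mem_closedBall_self hr₀pos.le))
  have hCc0 : 0 ≤ Cc := le_trans (norm_nonneg _) (hCc x₀ (mem_closedBall_self hr₀pos.le))
  have hCh0 : 0 ≤ Ch := le_trans (norm_nonneg _) (hCh 0)
  have hCh'0 : 0 ≤ Ch' := le_trans (norm_nonneg _) (hCh' 0)
  set B : ℝ := Ca * Ch + Cc * Ch' with hB_def
  have hB0 : 0 ≤ B := add_nonneg (mul_nonneg hCa0 hCh0) (mul_nonneg hCc0 hCh'0)
  have hbound : ∀ n, N ≤ n → ∀ x, ‖g n x‖ ≤ B := by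
    intro n hn x
    by_cases hx : x ∈ closedBall x₀ r₀
    · have hφb : ‖φ n x‖ ≤ Ch' := by
        have hn1 : (1:ℝ) ≤ (n:ℝ) := by exact_mod_cast hN1 n hn
        have : ‖φ n x‖ = (n:ℝ)⁻¹ * ‖h ((n:ℝ) • (x - x₀))‖ := by
          show ‖((n:ℝ))⁻¹ • h ((n:ℝ) • (x - x₀))‖ = _
          rw [norm_smul, Real.norm_eq_abs, abs_of_nonneg (by positivity)]
        rw [this]
        calc (n:ℝ)⁻¹ * ‖h ((n:ℝ) • (x - x₀))‖ ≤ 1 * Ch' := by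
              apply mul_le_mul _ (hCh' _) (norm_nonneg _) zero_le_one
              exact inv_le_one_of_one_le₀ hn1
          _ = Ch' := one_mul _
      have hdb : ∀ j : Fin d, ‖fderiv ℝ (φ n) x (EuclideanSpace.single j 1)‖ ≤ Ch := by
        intro j
        rw [hfdφ n (hN1 n hn)]
        calc ‖fderiv ℝ h ((n:ℝ) • (x - x₀)) (EuclideanSpace.single j 1)‖
            ≤ ‖fderiv ℝ h ((n:ℝ) • (x - x₀))‖ * ‖EuclideanSpace.single j (1:ℝ)‖ :=
              ContinuousLinearMap.le_opNorm _ _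
          _ ≤ Ch * 1 := by
              rw [EuclideanSpace.norm_single, norm_one]
              exact mul_le_mul_of_nonneg_right (hCh _) zero_le_one
          _ = Ch := mul_one _
      calc ‖g n x‖ ≤ ‖∑ j, a j x * fderiv ℝ (φ n) x (EuclideanSpace.single j 1)‖
            + ‖c x * φ n x‖ := norm_add_le _ _
        _ ≤ (∑ j, ‖a j x‖ * Ch) + Cc * Ch' := by
            apply add_le_add
            · refine le_trans (norm_sum_le _ _) (Finset.sum_le_sum fun j _ => ?_)
              rw [norm_mul]
              exact mul_le_mul_of_nonneg_left (hdb j) (norm_nonneg _)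
            · rw [norm_mul]
              exact mul_le_mul (hCc x hx) hφb (norm_nonneg _) hCc0
        _ ≤ Ca * Ch + Cc * Ch' := by
            apply add_le_add_left
            rw [← Finset.sum_mul]
            apply mul_le_mul_of_nonneg_right _ hCh0
            exact le_trans (le_abs_self _) (hCa x hx)
    · have : g n x = 0 := by
        apply hg0 n x
        intro hmem
        exact hx ((closedBall_subset_closedBall (hNinv n hn)) (hφsupp n (hN1 n hn) hmem))
      rw [this, norm_zero]
      exact hB0
  -- continuity of g n for n ≥ N
  have hgcont : ∀ n, N ≤ n → Continuous (g n) := by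
    intro n hn
    rw [continuous_iff_continuousAt]
    intro x
    by_cases hxU : x ∈ U
    · have hfc : Continuous (fderiv ℝ (φ n)) := (hφcd n).continuous_fderiv (by simp)
      have hcont : ContinuousOn (g n) U := by
        apply ContinuousOn.add
        · exact continuousOn_finset_sum Finset.univ fun j _ =>
            ((ha j).continuousOn).mul ((hfc.clm_apply continuous_const).continuousOn)
        · exact (hc.continuousOn).mul ((hφcd n).continuous.continuousOn)
      exact hcont.continuousAt (hU.mem_nhds hxU)
    · have hxts : x ∈ (tsupport (φ n))ᶜ := fun hmem => hxU (hφU n hn hmem)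
      have hev : g n =ᶠ[nhds x] (fun _ => 0) := by
        filter_upwards [(isClosed_tsupport (φ n)).isOpen_compl.mem_nhds hxts] with y hy
        exact hg0 n y hy
      exact hev.continuousAt
  -- pointwise limit
  set glim : EuclideanSpace ℝ (Fin d) → ℂ :=
    Set.indicator ({x₀} : Set (EuclideanSpace ℝ (Fin d))) (fun _ => a k x₀) with hglim_def
  have hptwise : ∀ x, Tendsto (fun n => g n x) atTop (𝓝 (glim x)) := by
    intro x
    by_cases hx : x = x₀
    · have hgl : glim x = a k x₀ := by rw [hx]; exact Set.indicator_of_mem rfl _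
      rw [hgl]
      apply Tendsto.congr' _ tendsto_const_nhds
      filter_upwards [eventually_ge_atTop 1] with n hn
      rw [hx]
      exact (hgx₀ n hn).symm
    · have hglim0 : glim x = 0 := Set.indicator_of_notMem hx _
      rw [hglim0]
      apply Tendsto.congr' _ tendsto_const_nhds
      have hdist : (0:ℝ) < dist x x₀ := dist_pos.2 hx
      have htd : Tendsto (fun n : ℕ => (n:ℝ)⁻¹) atTop (𝓝 0) :=
        tendsto_inv_atTop_zero.comp tendsto_natCast_atTop_atTop
      filter_upwards [htd.eventually_lt_const hdist, eventually_ge_atTop 1] with n hn hn1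
      refine (hg0 n x fun hmem => ?_).symm
      have := hφsupp n hn1 hmem
      rw [mem_closedBall] at this
      exact absurd (lt_of_le_of_lt this hn) (lt_irrefl _)
  -- limit of each integral
  have key : ∀ (μ : Measure (EuclideanSpace ℝ (Fin d))), IsFiniteMeasure μ →
      Tendsto (fun n => ∫ x, g n x ∂μ) atTop (𝓝 ((μ {x₀}).toReal • (a k x₀))) := by
    intro μ hμ
    haveI := hμ
    have hint : ∫ x, glim x ∂μ = (μ {x₀}).toReal • a k x₀ := by
      rw [hglim_def, integral_indicator (measurableSet_singleton x₀), setIntegral_const]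
      rfl
    rw [← hint]
    apply tendsto_integral_filter_of_dominated_convergence (fun _ => B)
    · filter_upwards [eventually_ge_atTop N] with n hn
      exact (hgcont n hn).aestronglyMeasurable
    · filter_upwards [eventually_ge_atTop N] with n hn
      exact ae_of_all _ (hbound n hn)
    · exact integrable_const B
    · exact ae_of_all _ hptwise
  -- conclusion
  have hev0 : Tendsto (fun n => (∫ x, g n x ∂μ₁) - (∫ x, g n x ∂μ₂)
      + Complex.I * ((∫ x, g n x ∂μ₃) - (∫ x, g n x ∂μ₄))) atTop (𝓝 0) := by
    apply Tendsto.congr' _ tendsto_const_nhds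
    filter_upwards [eventually_ge_atTop N] with n hn
    exact (heq (φ n) (hφcd n) (hφcs n (hN1 n hn)) (hφU n hn) (g n) (by rw [hg_def])).symm
  have hlim : Tendsto (fun n => (∫ x, g n x ∂μ₁) - (∫ x, g n x ∂μ₂)
      + Complex.I * ((∫ x, g n x ∂μ₃) - (∫ x, g n x ∂μ₄))) atTop
      (𝓝 ((μ₁ {x₀}).toReal • (a k x₀) - (μ₂ {x₀}).toReal • (a k x₀)
        + Complex.I * ((μ₃ {x₀}).toReal • (a k x₀) - (μ₄ {x₀}).toReal • (a k x₀)))) :=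
    ((key μ₁ inferInstance).sub (key μ₂ inferInstance)).add
      (Tendsto.const_mul Complex.I ((key μ₃ inferInstance).sub (key μ₄ inferInstance)))
  have hzero : (μ₁ {x₀}).toReal • (a k x₀) - (μ₂ {x₀}).toReal • (a k x₀)
      + Complex.I * ((μ₃ {x₀}).toReal • (a k x₀) - (μ₄ {x₀}).toReal • (a k x₀)) = 0 :=
    tendsto_nhds_unique hlim hev0
  have hfac : (((μ₁ {x₀}).toReal : ℂ) - ((μ₂ {x₀}).toReal : ℂ)
      + Complex.I * (((μ₃ {x₀}).toReal : ℂ) - ((μ₄ {x₀}).toReal : ℂ))) * a k x₀ = 0 := by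
    rw [← hzero]
    simp only [Complex.real_smul]
    ring
  rcases mul_eq_zero.mp hfac with he | he
  · exact he
  · exact absurd he hk
end
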